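/- Let A be a finite set of integers. Then Σ_n (σ_k(n) − s_k(n))^2 ≤ k^4 · M_{k−1}, where σ_k(n) counts representations n = x_1+...+x_k with x_i ∈ A, s_k(n) counts those with pairwise distinct x_i, and M_{k−1} = Σ_n σ_{k−1}(n)^2. -/

import Mathlib

open Finset

open scoped Classical in
/-- `M_k(A)`: number of solutions of `x₁+⋯+x_k = y₁+⋯+y_k` in `A^{2k}`. -/
noncomputable def Mcount (k : ℕ) (A : Finset ℤ) : ℕ :=
  (((Fintype.piFinset fun _ : Fin k => A) ×ˢ (Fintype.piFinset fun _ : Fin k => A)).filter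
    (fun p => (∑ i, p.1 i) = ∑ i, p.2 i)).card

open scoped Classical in
/-- `S_k(A)`: solutions with the `x_i` pairwise distinct and the `y_i` pairwise distinct. -/
noncomputable def Scount (k : ℕ) (A : Finset ℤ) : ℕ :=
  (((Fintype.piFinset fun _ : Fin k => A) ×ˢ (Fintype.piFinset fun _ : Fin k => A)).filter
    (fun p => (∑ i, p.1 i) = (∑ i, p.2 i) ∧ Function.Injective p.1 ∧ Function.Injective p.2)).card

open scoped Classical in
/-- `S_k^*(A₁, A₂)`: solutions with `x ∈ A₁^k`, `y ∈ A₂^k` and all `2k` entries pairwise distinct. -/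
noncomputable def Sstar2 (k : ℕ) (A₁ A₂ : Finset ℤ) : ℕ :=
  (((Fintype.piFinset fun _ : Fin k => A₁) ×ˢ (Fintype.piFinset fun _ : Fin k => A₂)).filter
    (fun p => (∑ i, p.1 i) = (∑ i, p.2 i) ∧ Function.Injective p.1 ∧ Function.Injective p.2 ∧
      ∀ i j, p.1 i ≠ p.2 j)).card

/-- `S_k^*(A)`. -/
noncomputable def Sstar (k : ℕ) (A : Finset ℤ) : ℕ := Sstar2 k A A

/-- `A` is a weak `B_k`-set (`B_k^*`-set): there is no solution of
`x₁+⋯+x_k = y₁+⋯+y_k` with all `2k` elements of `A` pairwise distinct. -/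
def IsWeakBkSet (k : ℕ) (A : Finset ℤ) : Prop :=
  ∀ x y : Fin k → ℤ, (∀ i, x i ∈ A) → (∀ i, y i ∈ A) →
    (∑ i, x i) = (∑ i, y i) → Function.Injective x → Function.Injective y →
      ∃ i j, x i = y j

open scoped Classical in
/-- `σ_k(n)`: number of representations of `n` as an ordered sum of `k` elements of `A`. -/
noncomputable def sigmaCount (k : ℕ) (A : Finset ℤ) (n : ℤ) : ℕ :=
  ((Fintype.piFinset fun _ : Fin k => A).filter (fun x => (∑ i, x i) = n)).card

open scoped Classical in
/-- `s_k(n)`: representations with pairwise distinct summands. -/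
noncomputable def sCount (k : ℕ) (A : Finset ℤ) (n : ℤ) : ℕ :=
  ((Fintype.piFinset fun _ : Fin k => A).filter
    (fun x => (∑ i, x i) = n ∧ Function.Injective x)).card


private lemma amgm (K : ℕ) {a b : ℝ} (ha : 0 ≤ a) (hb : 0 ≤ b) :
    ((K:ℝ)+1) * (a * b^K) ≤ a^(K+1) + K * b^(K+1) := by
  induction K with
  | zero => simp
  | succ K ih =>
    have key : 0 ≤ (a - b) * (a^(K+1) - b^(K+1)) := by
      rcases le_total a b with h | h
      · exact mul_nonneg_of_nonpos_of_nonpos (by linarith)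
          (by simp [sub_nonpos]; exact pow_le_pow_left₀ ha h _)
      · exact mul_nonneg (by linarith) (by simp [sub_nonneg]; exact pow_le_pow_left₀ hb h _)
    have h1 : a^(K+1) * b + a * b^(K+1) ≤ a^(K+2) + b^(K+2) := by
      linarith [key, (by ring :
        (a-b)*(a^(K+1)-b^(K+1)) = a^(K+2)+b^(K+2) - a^(K+1)*b - a*b^(K+1))]
    have h2 : ((K:ℝ)+1) * (a * b^K) * b ≤ (a^(K+1) + K * b^(K+1)) * b :=
      mul_le_mul_of_nonneg_right ih hb
    push_cast
    calc ((K:ℝ)+1+1) * (a*b^(K+1)) = ((K+1)*(a*b^K))*b + a*b^(K+1) := by ring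
      _ ≤ (a^(K+1) + K*b^(K+1))*b + a*b^(K+1) := by linarith
      _ = (a^(K+1)*b + a*b^(K+1)) + K*b^(K+2) := by ring
      _ ≤ (a^(K+2)+b^(K+2)) + K*b^(K+2) := by linarith
      _ = a^(K+2) + ((K:ℝ)+1)*b^(K+2) := by ring


noncomputable def ee (N : ℕ) (m : ℤ) : ℂ := Complex.exp (2 * Real.pi * Complex.I * m / N)

lemma ee_add (N : ℕ) (m m' : ℤ) : ee N (m + m') = ee N m * ee N m' := by
  rw [ee, ee, ee, ← Complex.exp_add]; congr 1; push_cast; ring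

lemma ee_nat_mul (N : ℕ) (t : ℕ) (m : ℤ) : ee N (t * m) = (ee N m) ^ t := by
  rw [ee, ee, ← Complex.exp_nat_mul]; congr 1; push_cast; ring

lemma ee_conj (N : ℕ) (m : ℤ) : (starRingEnd ℂ) (ee N m) = ee N (-m) := by
  rw [ee, ee, ← Complex.exp_conj]; congr 1
  simp only [map_div₀, map_mul, Complex.conj_I, map_ofNat, Complex.conj_ofReal,
    map_intCast, map_natCast]
  push_cast; ring

lemma ee_dvd_eq_one (N : ℕ) {m : ℤ} (h : (N:ℤ) ∣ m) : ee N m = 1 := by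
  rcases h with ⟨q, rfl⟩
  rcases Nat.eq_zero_or_pos N with rfl | hN
  · simp [ee]
  · rw [ee]
    have hNc : ((N:ℕ):ℂ) ≠ 0 := Nat.cast_ne_zero.2 hN.ne'
    have h : 2 * (Real.pi:ℂ) * Complex.I * (((N:ℤ) * q : ℤ) : ℂ) / (N:ℕ)
        = (q:ℂ) * (2 * Real.pi * Complex.I) := by
      push_cast; field_simp
    rw [h, Complex.exp_int_mul_two_pi_mul_I]

lemma ee_eq_one_iff (N : ℕ) (hN : 0 < N) (m : ℤ) : ee N m = 1 ↔ (N:ℤ) ∣ m := by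
  constructor
  · intro h
    rw [ee, Complex.exp_eq_one_iff] at h
    obtain ⟨n, hn⟩ := h
    have hNc : ((N:ℕ):ℂ) ≠ 0 := Nat.cast_ne_zero.2 hN.ne'
    have h2 : (2 * (Real.pi:ℂ) * Complex.I) * ((m:ℂ) / N) = (2 * (Real.pi:ℂ) * Complex.I) * n := by
      rw [mul_comm ((n:ℂ)) _] at hn
      rw [← hn]; ring
    have hne : (2 * (Real.pi:ℂ) * Complex.I) ≠ 0 := by
      simp [Real.pi_ne_zero, Complex.I_ne_zero, Complex.ofReal_ne_zero]
    have h3 : (m:ℂ) / N = n := mul_left_cancel₀ hne h2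
    have h4 : (m:ℂ) = n * N := by
      field_simp at h3; linear_combination h3
    have h5 : m = n * N := by exact_mod_cast h4
    exact ⟨n, by rw [h5]; ring⟩
  · exact ee_dvd_eq_one N

lemma ee_orth (N : ℕ) (hN : 0 < N) (m : ℤ) :
    ∑ t ∈ range N, ee N (t * m) = if (N:ℤ) ∣ m then (N:ℂ) else 0 := by
  split_ifs with h
  · rw [Finset.sum_congr rfl (fun t _ => by
      rw [ee_nat_mul, ee_dvd_eq_one N h, one_pow])]
    simp
  · have hne : ee N m ≠ 1 := fun hc => h ((ee_eq_one_iff N hN m).1 hc)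
    have h1 : ∑ t ∈ range N, ee N (t * m) = ∑ t ∈ range N, (ee N m)^t :=
      Finset.sum_congr rfl (fun t _ => ee_nat_mul N t m)
    have h2 : (ee N m)^N = 1 := by
      rw [← ee_nat_mul]; exact ee_dvd_eq_one N ⟨m, rfl⟩
    rw [h1, geom_sum_eq hne, h2]; simp

lemma ee_zero (N : ℕ) : ee N 0 = 1 := by simp [ee]

lemma ee_sum (N : ℕ) {ι : Type*} (s : Finset ι) (F : ι → ℤ) :
    ee N (∑ i ∈ s, F i) = ∏ i ∈ s, ee N (F i) := by
  induction s using Finset.cons_induction with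
  | empty => simp [ee_zero]
  | cons a s ha ih => rw [Finset.sum_cons, Finset.prod_cons, ee_add, ih]

lemma counting {β : Type*} (N : ℕ) (hN : 0 < N) (s : Finset β) (f : β → ℤ)
    [DecidablePred fun p : β × β => f p.1 = f p.2]
    (hf : ∀ b ∈ s, 2 * |f b| < (N:ℤ)) :
    (N:ℂ) * (((s ×ˢ s).filter fun p => f p.1 = f p.2).card : ℂ)
      = ∑ t ∈ range N, (∑ b ∈ s, ee N (t * f b)) * (starRingEnd ℂ) (∑ b ∈ s, ee N (t * f b)) := by
  have hterm : ∀ t : ℕ, (∑ b ∈ s, ee N (t * f b)) * (starRingEnd ℂ) (∑ b ∈ s, ee N (t * f b))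
      = ∑ b ∈ s, ∑ b' ∈ s, ee N (t * (f b - f b')) := by
    intro t
    rw [map_sum, Finset.sum_mul_sum]
    refine Finset.sum_congr rfl fun b _ => Finset.sum_congr rfl fun b' _ => ?_
    rw [ee_conj, ← ee_add]
    congr 1; ring
  rw [Finset.sum_congr rfl fun t _ => hterm t, Finset.sum_comm]
  have : ∀ b ∈ s, ∑ t ∈ range N, ∑ b' ∈ s, ee N (t * (f b - f b'))
      = ∑ b' ∈ s, if f b = f b' then (N:ℂ) else 0 := by
    intro b hb
    rw [Finset.sum_comm]
    refine Finset.sum_congr rfl fun b' hb' => ?_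
    rw [ee_orth N hN]
    have hiff : ((N:ℤ) ∣ f b - f b') ↔ f b = f b' := by
      constructor
      · intro hdvd
        exact sub_eq_zero.1 (Int.eq_zero_of_abs_lt_dvd hdvd (by
          have := hf b hb; have := hf b' hb'
          calc |f b - f b'| ≤ |f b| + |f b'| := abs_sub _ _
            _ < N := by linarith))
      · intro h; rw [h]; simp
    simp only [hiff]
  rw [Finset.sum_congr rfl this]
  rw [Finset.card_filter, Finset.sum_product]
  push_cast
  rw [Finset.mul_sum]
  refine Finset.sum_congr rfl fun b _ => ?_
  rw [Finset.mul_sum]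
  refine Finset.sum_congr rfl fun b' _ => ?_
  split_ifs <;> simp

lemma sum_range_double (N : ℕ) (hodd : Odd N) (W : ℕ → ℝ) (hW : ∀ u, W u = W (u % N)) :
    ∑ t ∈ range N, W (2*t) = ∑ t ∈ range N, W t := by
  obtain ⟨r, hr⟩ := hodd
  have hN : 0 < N := by omega
  refine Finset.sum_nbij' (i := fun t => (2*t) % N) (j := fun u => ((r+1)*u) % N)
    (fun a ha => Finset.mem_range.2 (Nat.mod_lt _ hN))
    (fun a ha => Finset.mem_range.2 (Nat.mod_lt _ hN)) ?_ ?_ ?_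
  · intro t ht
    have h1 : ((r+1) * ((2*t) % N)) % N = ((r+1)*(2*t)) % N :=
      (Nat.mod_modEq (2*t) N).mul_left (r+1)
    rw [h1, (by rw [hr]; ring : (r+1)*(2*t) = t + N*t), Nat.add_mul_mod_self_left,
      Nat.mod_eq_of_lt (Finset.mem_range.1 ht)]
  · intro u hu
    have h1 : (2 * (((r+1)*u) % N)) % N = (2*((r+1)*u)) % N :=
      (Nat.mod_modEq ((r+1)*u) N).mul_left 2
    rw [h1, (by rw [hr]; ring : 2*((r+1)*u) = u + N*u), Nat.add_mul_mod_self_left,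
      Nat.mod_eq_of_lt (Finset.mem_range.1 hu)]
  · intro t ht
    exact hW (2*t)

lemma core (K : ℕ) (A : Finset ℤ) :
    (((Fintype.piFinset fun _ : Fin (K+1) => A) ×ˢ (Fintype.piFinset fun _ : Fin (K+1) => A)).filter
        fun p => (∑ m, (if m = 0 then 2 else 1 : ℤ) * p.1 m)
          = ∑ m, (if m = 0 then 2 else 1 : ℤ) * p.2 m).card
      ≤ (((Fintype.piFinset fun _ : Fin (K+1) => A) ×ˢ (Fintype.piFinset fun _ : Fin (K+1) => A)).filter
        fun p => (∑ m, p.1 m) = ∑ m, p.2 m).card := by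
  classical
  set P := Fintype.piFinset fun _ : Fin (K+1) => A with hP
  set Lc : (Fin (K+1) → ℤ) → ℤ := fun y => ∑ m, (if m = 0 then 2 else 1 : ℤ) * y m with hLc
  set Sf : (Fin (K+1) → ℤ) → ℤ := fun y => ∑ m, y m with hSf
  set Cb := A.sup fun a => a.natAbs with hCb
  have hA : ∀ a ∈ A, |a| ≤ (Cb:ℤ) := fun a ha => by
    rw [Int.abs_eq_natAbs]
    exact_mod_cast Finset.le_sup (f := fun a : ℤ => a.natAbs) ha
  set N := 4*(K+1)*Cb + 1 with hNdef
  have hN : 0 < N := Nat.succ_pos _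
  have hodd : Odd N := ⟨2*((K+1)*Cb), by rw [hNdef]; ring⟩
  have hmem : ∀ y, y ∈ P → ∀ m, |y m| ≤ (Cb:ℤ) := fun y hy m =>
    hA _ ((Fintype.mem_piFinset).1 hy m)
  have hLb : ∀ y ∈ P, 2 * |Lc y| < (N:ℤ) := by
    intro y hy
    have h1 : |Lc y| ≤ ∑ m : Fin (K+1), |(if m = 0 then 2 else 1 : ℤ) * y m| :=
      Finset.abs_sum_le_sum_abs _ _
    have h2 : ∀ m : Fin (K+1), |(if m = 0 then 2 else 1 : ℤ) * y m| ≤ 2 * Cb := by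
      intro m
      rw [abs_mul]
      have hc : |(if m = 0 then 2 else 1 : ℤ)| ≤ 2 := by split_ifs <;> norm_num
      exact mul_le_mul hc (hmem y hy m) (abs_nonneg _) (by norm_num)
    have h3 : |Lc y| ≤ (K+1) * (2 * Cb) := by
      calc |Lc y| ≤ ∑ m : Fin (K+1), |(if m = 0 then 2 else 1 : ℤ) * y m| := h1
        _ ≤ ∑ _m : Fin (K+1), (2 * Cb : ℤ) := Finset.sum_le_sum fun m _ => h2 m
        _ = (K+1) * (2 * Cb) := by
            rw [Finset.sum_const, Finset.card_univ, Fintype.card_fin, nsmul_eq_mul]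
            push_cast; ring
    have : ((N:ℤ)) = 4*(K+1)*Cb + 1 := by exact_mod_cast congrArg (Nat.cast : ℕ → ℤ) hNdef
    push_cast at this ⊢
    linarith
  have hSb : ∀ y ∈ P, 2 * |Sf y| < (N:ℤ) := by
    intro y hy
    have h1 : |Sf y| ≤ ∑ m : Fin (K+1), |y m| := Finset.abs_sum_le_sum_abs _ _
    have h3 : |Sf y| ≤ (K+1) * (Cb : ℤ) := by
      calc |Sf y| ≤ ∑ m : Fin (K+1), |y m| := h1
        _ ≤ ∑ _m : Fin (K+1), (Cb : ℤ) := Finset.sum_le_sum fun m _ => hmem y hy m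
        _ = (K+1) * (Cb:ℤ) := by
            rw [Finset.sum_const, Finset.card_univ, Fintype.card_fin, nsmul_eq_mul]
            push_cast; ring
    have : ((N:ℤ)) = 4*(K+1)*Cb + 1 := by exact_mod_cast congrArg (Nat.cast : ℕ → ℤ) hNdef
    have hCb0 : (0:ℤ) ≤ Cb := by positivity
    push_cast at this ⊢
    nlinarith
  set F : ℕ → ℂ := fun u => ∑ a ∈ A, ee N (u * a) with hF
  have hGL : ∀ t : ℕ, (∑ y ∈ P, ee N (t * Lc y)) = F (2*t) * F t ^ K := by
    intro t
    have h1 : ∀ y : Fin (K+1) → ℤ, ee N (t * Lc y)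
        = ∏ m : Fin (K+1), ee N (t * ((if m = 0 then 2 else 1 : ℤ) * y m)) := by
      intro y
      rw [← ee_sum]
      congr 1
      rw [hLc, Finset.mul_sum]
    rw [Finset.sum_congr rfl fun y _ => h1 y, hP]
    rw [← Finset.prod_univ_sum (fun _ : Fin (K+1) => A)
      (fun m a => ee N (↑t * ((if m = 0 then (2:ℤ) else 1) * a)))]
    rw [Fin.prod_univ_succ]
    congr 1
    · simp only [if_pos rfl]
      refine Finset.sum_congr rfl fun a _ => ?_
      congr 1
      push_cast; ring
    · have : ∀ m : Fin K, (∑ a ∈ A, ee N (t * ((if (m.succ : Fin (K+1)) = 0 then 2 else 1 : ℤ) * a)))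
          = F t := by
        intro m
        simp only [if_neg (Fin.succ_ne_zero m)]
        refine Finset.sum_congr rfl fun a _ => ?_
        congr 1; ring
      rw [Finset.prod_congr rfl fun m _ => this m, Finset.prod_const, Finset.card_univ,
        Fintype.card_fin]
  have hGS : ∀ t : ℕ, (∑ y ∈ P, ee N (t * Sf y)) = F t ^ (K+1) := by
    intro t
    have h1 : ∀ y : Fin (K+1) → ℤ, ee N (t * Sf y) = ∏ m : Fin (K+1), ee N (t * y m) := by
      intro y
      rw [← ee_sum]
      congr 1
      rw [hSf, Finset.mul_sum]
    rw [Finset.sum_congr rfl fun y _ => h1 y, hP,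
      ← Finset.prod_univ_sum (fun _ : Fin (K+1) => A) (fun _ a => ee N (↑t * a)),
      Finset.prod_const, Finset.card_univ, Fintype.card_fin]
  have hmod : ∀ u : ℕ, F u = F (u % N) := by
    intro u
    refine Finset.sum_congr rfl fun a _ => ?_
    have h1 : (u:ℤ) * a = ((u % N : ℕ):ℤ) * a + (N:ℤ) * (((u / N : ℕ):ℤ) * a) := by
      have h2 : (u:ℤ) = (N:ℤ) * ((u / N : ℕ):ℤ) + ((u % N : ℕ):ℤ) := by
        exact_mod_cast (Nat.div_add_mod u N).symm
      rw [h2]; ring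
    rw [h1, ee_add, ee_dvd_eq_one N ⟨_, rfl⟩, mul_one]
  have c1 := counting N hN P Lc hLb
  have c2 := counting N hN P Sf hSb
  set T := ((P ×ˢ P).filter fun p => Lc p.1 = Lc p.2).card with hT
  set M := ((P ×ˢ P).filter fun p => Sf p.1 = Sf p.2).card with hM
  have key1 : (N:ℝ) * (T:ℝ) = ∑ t ∈ range N, Complex.normSq (F (2*t)) * Complex.normSq (F t)^K := by
    have c1' : (N:ℂ) * (T:ℂ) = ∑ t ∈ range N,
        ((Complex.normSq (F (2*t)) * Complex.normSq (F t)^K : ℝ) : ℂ) := by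
      rw [c1]
      refine Finset.sum_congr rfl fun t _ => ?_
      rw [hGL t, Complex.mul_conj, Complex.normSq_mul, map_pow Complex.normSq]
    exact_mod_cast c1'
  have key2 : (N:ℝ) * (M:ℝ) = ∑ t ∈ range N, Complex.normSq (F t)^(K+1) := by
    have c2' : (N:ℂ) * (M:ℂ) = ∑ t ∈ range N, ((Complex.normSq (F t)^(K+1) : ℝ) : ℂ) := by
      rw [c2]
      refine Finset.sum_congr rfl fun t _ => ?_
      rw [hGS t, Complex.mul_conj, map_pow Complex.normSq]
    exact_mod_cast c2'
  have key3 : ∑ t ∈ range N, Complex.normSq (F (2*t))^(K+1)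
      = ∑ t ∈ range N, Complex.normSq (F t)^(K+1) :=
    sum_range_double N hodd (fun u => Complex.normSq (F u)^(K+1))
      (fun u => by
        show Complex.normSq (F u) ^ (K+1) = Complex.normSq (F (u % N)) ^ (K+1)
        rw [← hmod u])
  have key4 : ((K:ℝ)+1) * ((N:ℝ) * (T:ℝ)) ≤ ((K:ℝ)+1) * ((N:ℝ) * (M:ℝ)) := by
    calc ((K:ℝ)+1) * ((N:ℝ) * (T:ℝ))
        = ∑ t ∈ range N, ((K:ℝ)+1) * (Complex.normSq (F (2*t)) * Complex.normSq (F t)^K) := by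
          rw [key1, Finset.mul_sum]
      _ ≤ ∑ t ∈ range N, (Complex.normSq (F (2*t))^(K+1) + K * Complex.normSq (F t)^(K+1)) :=
          Finset.sum_le_sum fun t _ => amgm K (Complex.normSq_nonneg _) (Complex.normSq_nonneg _)
      _ = ((K:ℝ)+1) * ((N:ℝ) * (M:ℝ)) := by
          rw [Finset.sum_add_distrib, key3, ← Finset.mul_sum, ← key2]
          ring
  have hTM : (T:ℝ) ≤ (M:ℝ) := by
    have hpos : (0:ℝ) < ((K:ℝ)+1) * (N:ℝ) := by positivity
    have := key4
    rw [← mul_assoc, ← mul_assoc] at this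
    exact le_of_mul_le_mul_left this hpos
  exact_mod_cast hTM

lemma sum_sq_card {β : Type*} [DecidableEq β] (s : Finset β) (f : β → ℤ) :
    ∑ n ∈ s.image f, ((s.filter fun b => f b = n).card)^2
      = ((s ×ˢ s).filter fun p => f p.1 = f p.2).card := by
  classical
  have hset : (s ×ˢ s).filter (fun p => f p.1 = f p.2)
      = (s.image f).biUnion (fun n => (s.filter fun b => f b = n) ×ˢ (s.filter fun b => f b = n)) := by
    ext ⟨a, b⟩
    simp only [mem_filter, mem_product, mem_biUnion, mem_image]
    constructor
    · rintro ⟨⟨ha, hb⟩, hfab⟩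
      exact ⟨f b, ⟨b, hb, rfl⟩, ⟨ha, hfab⟩, ⟨hb, rfl⟩⟩
    · rintro ⟨n, _, ⟨ha, hfa⟩, ⟨hb, hfb⟩⟩
      exact ⟨⟨ha, hb⟩, by rw [hfa, hfb]⟩
  rw [hset, Finset.card_biUnion]
  · exact Finset.sum_congr rfl fun n _ => by rw [Finset.card_product, sq]
  · intro n hn m hm hnm
    show Disjoint _ _
    rw [Finset.disjoint_left]
    rintro ⟨a, b⟩ hp hq
    simp only [mem_product, mem_filter] at hp hq
    exact hnm (hp.1.2 ▸ hq.1.2 ▸ rfl)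

lemma noninj_le (K : ℕ) (A : Finset ℤ) (n : ℤ) :
    ((Fintype.piFinset fun _ : Fin (K+2) => A).filter
      fun x => (∑ i, x i) = n ∧ ¬ Function.Injective x).card
    ≤ (K+2)*(K+2) * ((Fintype.piFinset fun _ : Fin (K+1) => A).filter
        fun y => ((∑ m, y m) + y 0) = n).card := by
  classical
  set Q := Fintype.piFinset fun _ : Fin (K+2) => A with hQ
  set Y := (Fintype.piFinset fun _ : Fin (K+1) => A).filter
      (fun y => ((∑ m, y m) + y 0) = n) with hY
  have h01 : (0 : Fin (K+2)) ≠ 1 := by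
    simp [Fin.ext_iff]
  have hpair : ∀ i j : Fin (K+2), i ≠ j →
      (Q.filter fun x => (∑ i', x i') = n ∧ x i = x j).card ≤ Y.card := by
    intro i j hij
    set s1 := Equiv.swap (0 : Fin (K+2)) i with hs1
    set π : Equiv.Perm (Fin (K+2)) := (Equiv.swap (1 : Fin (K+2)) (s1 j)).trans s1 with hπ
    have hs1j : s1 j ≠ 0 := by
      intro hc
      have : j = s1 0 := by
        have := congrArg s1 hc
        rwa [Equiv.swap_apply_self] at this
      rw [Equiv.swap_apply_left] at this
      exact hij.symm this
    have hπ0 : π 0 = i := by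
      rw [hπ, Equiv.trans_apply, Equiv.swap_apply_of_ne_of_ne h01 (Ne.symm hs1j)]
      exact Equiv.swap_apply_left _ _
    have hπ1 : π 1 = j := by
      rw [hπ, Equiv.trans_apply, Equiv.swap_apply_left, hs1, Equiv.swap_apply_self]
    apply Finset.card_le_card_of_injOn (fun x => fun m : Fin (K+1) => x (π m.succ))
    · intro x hx
      obtain ⟨hxQ, hsx, hex⟩ := Finset.mem_filter.1 hx
      rw [hY, Finset.mem_coe, Finset.mem_filter]
      constructor
      · rw [Fintype.mem_piFinset]
        intro m
        exact (Fintype.mem_piFinset).1 hxQ _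
      · have hsum2 : ∑ l : Fin (K+2), x (π l) = n := by
          rw [Equiv.sum_comp π x]; exact hsx
        have hsplit : ∑ l : Fin (K+2), x (π l)
            = x (π 0) + ∑ m : Fin (K+1), x (π m.succ) := Fin.sum_univ_succ _
        have h0s : ((0 : Fin (K+1)).succ : Fin (K+2)) = 1 := Fin.succ_zero_eq_one
        show (∑ m : Fin (K+1), x (π m.succ)) + x (π (0 : Fin (K+1)).succ) = n
        have e1 : x (π (0 : Fin (K+1)).succ) = x (π 0) := by
          rw [h0s, hπ1, ← hex, ← hπ0]
        rw [e1]
        linarith [hsplit, hsum2]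
    · intro x hx x' hx' hfeq
      obtain ⟨hxQ, hsx, hex⟩ := Finset.mem_filter.1 (by exact hx)
      obtain ⟨hxQ', hsx', hex'⟩ := Finset.mem_filter.1 (by exact hx')
      have hl : ∀ m : Fin (K+1), x (π m.succ) = x' (π m.succ) := fun m => congrFun hfeq m
      funext l
      rcases Fin.eq_zero_or_eq_succ (π.symm l) with h0 | ⟨m, hm⟩
      · have hl0 : l = π 0 := by rw [← h0, Equiv.apply_symm_apply]
        have h1 := hl 0
        rw [Fin.succ_zero_eq_one] at h1
        rw [hl0, hπ0, hex, ← hπ1, h1, hπ1, ← hex', ← hπ0]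
      · have hl1 : l = π m.succ := by rw [← hm, Equiv.apply_symm_apply]
        rw [hl1]; exact hl m
  have hsub : Q.filter (fun x => (∑ i, x i) = n ∧ ¬ Function.Injective x)
      ⊆ (Finset.univ.filter fun q : Fin (K+2) × Fin (K+2) => q.1 ≠ q.2).biUnion
        (fun q => Q.filter fun x => (∑ i, x i) = n ∧ x q.1 = x q.2) := by
    intro x hx
    obtain ⟨hxQ, hsum, hni⟩ := Finset.mem_filter.1 hx
    obtain ⟨i, j, hijv, hne⟩ := Function.not_injective_iff.1 hni
    refine Finset.mem_biUnion.2 ⟨(i, j), by simpa using hne, ?_⟩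
    exact Finset.mem_filter.2 ⟨hxQ, hsum, hijv⟩
  calc (Q.filter fun x => (∑ i, x i) = n ∧ ¬ Function.Injective x).card
      ≤ ∑ q ∈ Finset.univ.filter fun q : Fin (K+2) × Fin (K+2) => q.1 ≠ q.2,
          (Q.filter fun x => (∑ i, x i) = n ∧ x q.1 = x q.2).card :=
        le_trans (Finset.card_le_card hsub) (Finset.card_biUnion_le)
    _ ≤ ∑ _q ∈ Finset.univ.filter fun q : Fin (K+2) × Fin (K+2) => q.1 ≠ q.2, Y.card :=
        Finset.sum_le_sum fun q hq => hpair q.1 q.2 (by simpa using (Finset.mem_filter.1 hq).2)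
    _ = (Finset.univ.filter fun q : Fin (K+2) × Fin (K+2) => q.1 ≠ q.2).card * Y.card := by
        rw [Finset.sum_const, smul_eq_mul]
    _ ≤ (K+2)*(K+2) * Y.card := by
        apply Nat.mul_le_mul_right
        calc (Finset.univ.filter fun q : Fin (K+2) × Fin (K+2) => q.1 ≠ q.2).card
            ≤ (Finset.univ : Finset (Fin (K+2) × Fin (K+2))).card := Finset.card_filter_le _ _
          _ = (K+2)*(K+2) := by simp
theorem ruzsa_5_8 (k : ℕ) (hk : 2 ≤ k) (A : Finset ℤ) :
    (∑ n ∈ (Fintype.piFinset fun _ : Fin k => A).image (fun x => ∑ i, x i),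
        ((sigmaCount k A n : ℤ) - (sCount k A n : ℤ)) ^ 2)
      ≤ (k : ℤ) ^ 4 * (Mcount (k - 1) A : ℤ) := by
  classical
  obtain ⟨K, rfl⟩ : ∃ K, k = K + 2 := ⟨k - 2, by omega⟩
  set Q := Fintype.piFinset fun _ : Fin (K+2) => A with hQ
  set P := Fintype.piFinset fun _ : Fin (K+1) => A with hPd
  set φf : ℤ → ℕ := fun n => (P.filter fun y => ((∑ m, y m) + y 0) = n).card with hφ
  have hdiff : ∀ n : ℤ, (sigmaCount (K+2) A n : ℤ) - sCount (K+2) A n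
      = ((Q.filter fun x => (∑ i, x i) = n ∧ ¬ Function.Injective x).card : ℤ) := by
    intro n
    have hsplit := Finset.card_filter_add_card_filter_not
      (s := Q.filter fun x => (∑ i, x i) = n) (p := fun x => Function.Injective x)
    rw [Finset.filter_filter, Finset.filter_filter] at hsplit
    have hσ : sigmaCount (K+2) A n = (Q.filter fun x => (∑ i, x i) = n).card := by
      simp only [sigmaCount, Finset.filter_congr_decidable, hQ]
    have hs : sCount (K+2) A n
        = (Q.filter fun x => (∑ i, x i) = n ∧ Function.Injective x).card := by
      simp only [sCount, Finset.filter_congr_decidable, hQ]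
    rw [hσ, hs]
    linarith [hsplit]
  have hbound : ∀ n : ℤ,
      ((Q.filter fun x => (∑ i, x i) = n ∧ ¬ Function.Injective x).card : ℤ)
        ≤ ((K:ℤ)+2)*((K:ℤ)+2) * (φf n : ℤ) := by
    intro n
    have := noninj_le K A n
    have h2 : ((Q.filter fun x => (∑ i, x i) = n ∧ ¬ Function.Injective x).card : ℤ)
        ≤ (((K+2)*(K+2) * φf n : ℕ) : ℤ) := by exact_mod_cast this
    calc ((Q.filter fun x => (∑ i, x i) = n ∧ ¬ Function.Injective x).card : ℤ)
        ≤ (((K+2)*(K+2) * φf n : ℕ) : ℤ) := h2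
      _ = ((K:ℤ)+2)*((K:ℤ)+2) * (φf n : ℤ) := by push_cast; ring
  have hsumsq : ∑ n ∈ Q.image (fun x => ∑ i, x i), (φf n)^2
      ≤ ((P ×ˢ P).filter fun p => ((∑ m, p.1 m) + p.1 0) = ((∑ m, p.2 m) + p.2 0)).card := by
    rw [← sum_sq_card P (fun y => (∑ m, y m) + y 0)]
    have hvanish : ∀ n ∈ Q.image (fun x => ∑ i, x i),
        n ∉ (Q.image (fun x => ∑ i, x i)) ∩ (P.image fun y => (∑ m, y m) + y 0) → (φf n)^2 = 0 := by
      intro n hn hnot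
      have : n ∉ P.image fun y => (∑ m, y m) + y 0 := fun hc =>
        hnot (Finset.mem_inter.2 ⟨hn, hc⟩)
      have hz : φf n = 0 :=
        Finset.card_eq_zero.2 (Finset.filter_eq_empty_iff.2
          (fun y hy hpy => this (Finset.mem_image.2 ⟨y, hy, hpy⟩)))
      rw [hz]; rfl
    calc ∑ n ∈ Q.image (fun x => ∑ i, x i), (φf n)^2
        = ∑ n ∈ (Q.image (fun x => ∑ i, x i)) ∩ (P.image fun y => (∑ m, y m) + y 0),
            (φf n)^2 :=
          (Finset.sum_subset Finset.inter_subset_left (by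
            intro n hn hnot
            exact hvanish n hn (by simpa using hnot))).symm
      _ ≤ ∑ n ∈ P.image (fun y => (∑ m, y m) + y 0), (φf n)^2 :=
          Finset.sum_le_sum_of_subset Finset.inter_subset_right
      _ = ∑ n ∈ P.image (fun y => (∑ m, y m) + y 0),
            ((P.filter fun y => ((∑ m, y m) + y 0) = n).card)^2 := rfl
  have hLrw : ∀ y : Fin (K+1) → ℤ,
      (∑ m, (if m = 0 then 2 else 1 : ℤ) * y m) = (∑ m, y m) + y 0 := by
    intro y
    rw [Fin.sum_univ_succ, Fin.sum_univ_succ (f := fun m : Fin (K+1) => y m)]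
    simp [Fin.succ_ne_zero]
    ring
  have hcore : ((P ×ˢ P).filter fun p => ((∑ m, p.1 m) + p.1 0) = ((∑ m, p.2 m) + p.2 0)).card
      ≤ Mcount (K+1) A := by
    have h1 := core K A
    have h2 : ((P ×ˢ P).filter fun p => ((∑ m, p.1 m) + p.1 0) = ((∑ m, p.2 m) + p.2 0))
        = ((P ×ˢ P).filter fun p => (∑ m, (if m = 0 then 2 else 1 : ℤ) * p.1 m)
            = ∑ m, (if m = 0 then 2 else 1 : ℤ) * p.2 m) :=
      Finset.filter_congr fun p _ => by rw [hLrw, hLrw]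
    have h3 : (((P ×ˢ P).filter fun p => (∑ m, p.1 m) = ∑ m, p.2 m)).card = Mcount (K+1) A := by
      simp only [Mcount, Finset.filter_congr_decidable, hPd]
    rw [h2, ← h3]
    exact h1
  have hMeq : Mcount (K + 2 - 1) A = Mcount (K+1) A := by norm_num
  rw [hMeq]
  calc ∑ n ∈ Q.image (fun x => ∑ i, x i),
        ((sigmaCount (K+2) A n : ℤ) - sCount (K+2) A n)^2
      = ∑ n ∈ Q.image (fun x => ∑ i, x i),
          ((Q.filter fun x => (∑ i, x i) = n ∧ ¬ Function.Injective x).card : ℤ)^2 :=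
        Finset.sum_congr rfl fun n _ => by rw [hdiff n]
    _ ≤ ∑ n ∈ Q.image (fun x => ∑ i, x i), (((K:ℤ)+2)*((K:ℤ)+2) * (φf n : ℤ))^2 :=
        Finset.sum_le_sum fun n _ => pow_le_pow_left₀ (Int.natCast_nonneg _) (hbound n) 2
    _ = ((K:ℤ)+2)^4 * ∑ n ∈ Q.image (fun x => ∑ i, x i), ((φf n : ℤ))^2 := by
        rw [Finset.mul_sum]
        exact Finset.sum_congr rfl fun n _ => by ring
    _ ≤ ((K:ℤ)+2)^4 * (Mcount (K+1) A : ℤ) := by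
        have hstep : ∑ n ∈ Q.image (fun x => ∑ i, x i), ((φf n : ℤ))^2
            ≤ (Mcount (K+1) A : ℤ) := by
          have := le_trans hsumsq hcore
          calc ∑ n ∈ Q.image (fun x => ∑ i, x i), ((φf n : ℤ))^2
              = ((∑ n ∈ Q.image (fun x => ∑ i, x i), (φf n)^2 : ℕ) : ℤ) := by push_cast; rfl
            _ ≤ (Mcount (K+1) A : ℤ) := by exact_mod_cast this
        have h4 : (0:ℤ) ≤ ((K:ℤ)+2)^4 := by positivity
        exact mul_le_mul_of_nonneg_left hstep h4
    _ = ((K:ℤ)+2)^4 * (Mcount (K+1) A : ℤ) := rfl
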